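/- Fix $\alpha>0$, $\rho_\ell>0$, $\mathtt v_\ell\in\mathbb{R}$ and $p(\rho)=\alpha^2\rho$. For $0<\delta\le\rho_\ell$, define $\mathtt v_r(\delta)=\mathtt v_\ell-\sqrt{\frac{(p(\delta)-p(\rho_\ell))(\delta-\rho_\ell)}{\delta\rho_\ell}}$ and let $\sigma(\delta)=\frac{\rho_\ell\mathtt v_\ell-\delta\,\mathtt v_r(\delta)}{\rho_\ell-\delta}$. Then as $\delta\to 0^+$: (i) $\sigma(\delta)\to\mathtt v_\ell$; (ii) $\delta\,\mathtt v_r(\delta)\to 0$; and (iii) $\delta\,\mathtt v_r(\delta)^2\to \alpha^2\rho_\ell = p(\rho_\ell)$. -/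

import Mathlib

/-- Vanishing-density limit of a 2-shock for isothermal Euler with
`p(ρ) = α²ρ`: the shock speed tends to `v_ℓ`, the momentum of the right state
vanishes, and `δ v_r(δ)²` converges to the concentration term `p(ρ_ℓ)`. -/
theorem vacuum_limit_of_two_shock
    (α ρl vl : ℝ) (hα : 0 < α) (hρl : 0 < ρl) :
    let p : ℝ → ℝ := fun ρ => α ^ 2 * ρ
    let vr : ℝ → ℝ := fun δ => vl - Real.sqrt ((p δ - p ρl) * (δ - ρl) / (δ * ρl))
    let σ : ℝ → ℝ := fun δ => (ρl * vl - δ * vr δ) / (ρl - δ)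
    Filter.Tendsto σ (nhdsWithin 0 (Set.Ioi 0)) (nhds vl) ∧
    Filter.Tendsto (fun δ => δ * vr δ) (nhdsWithin 0 (Set.Ioi 0)) (nhds 0) ∧
    Filter.Tendsto (fun δ => δ * (vr δ) ^ 2) (nhdsWithin 0 (Set.Ioi 0))
      (nhds (α ^ 2 * ρl)) := by
  intro p vr σ
  have ht : (0:ℝ) < Real.sqrt ρl := Real.sqrt_pos.mpr hρl
  have hρs : Real.sqrt ρl * Real.sqrt ρl = ρl := Real.mul_self_sqrt hρl.le
  -- eventually 0 < δ < ρl
  have hev : ∀ᶠ δ in nhdsWithin 0 (Set.Ioi 0), 0 < δ ∧ δ < ρl := by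
    filter_upwards [self_mem_nhdsWithin,
      eventually_nhdsWithin_of_eventually_nhds (eventually_lt_nhds hρl)] with δ h1 h2
    exact ⟨h1, h2⟩
  -- the square root term
  have hsqrt : ∀ δ : ℝ, 0 < δ → δ < ρl →
      Real.sqrt ((p δ - p ρl) * (δ - ρl) / (δ * ρl))
        = α * (ρl - δ) / (Real.sqrt δ * Real.sqrt ρl) := by
    intro δ hδ hδρ
    have hs : (0:ℝ) < Real.sqrt δ := Real.sqrt_pos.mpr hδ
    have hδs : Real.sqrt δ * Real.sqrt δ = δ := Real.mul_self_sqrt hδ.le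
    have h1 : (p δ - p ρl) * (δ - ρl) / (δ * ρl)
        = (α * (ρl - δ) / (Real.sqrt δ * Real.sqrt ρl)) ^ 2 := by
      simp only [p]
      rw [div_pow, mul_pow]
      rw [show (Real.sqrt δ * Real.sqrt ρl) ^ 2 = δ * ρl by
        rw [mul_pow, sq, sq, hδs, hρs]]
      ring
    rw [h1, Real.sqrt_sq
      (div_nonneg (mul_nonneg hα.le (by linarith)) (by positivity))]
  -- part (ii)
  have h2 : Filter.Tendsto (fun δ => δ * vr δ) (nhdsWithin 0 (Set.Ioi 0)) (nhds 0) := by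
    have hcont : Filter.Tendsto
        (fun δ : ℝ => δ * vl - α * Real.sqrt δ * (ρl - δ) / Real.sqrt ρl)
        (nhdsWithin 0 (Set.Ioi 0)) (nhds 0) := by
      have hc : Continuous fun δ : ℝ => δ * vl - α * Real.sqrt δ * (ρl - δ) / Real.sqrt ρl := by
        fun_prop
      have h : Filter.Tendsto (fun δ : ℝ => δ * vl - α * Real.sqrt δ * (ρl - δ) / Real.sqrt ρl)
          (nhdsWithin 0 (Set.Ioi 0))
          (nhds (0 * vl - α * Real.sqrt 0 * (ρl - 0) / Real.sqrt ρl)) :=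
        (hc.tendsto 0).mono_left nhdsWithin_le_nhds
      simpa using h
    refine hcont.congr' ?_
    filter_upwards [hev] with δ ⟨hδ, hδρ⟩
    have hs : (0:ℝ) < Real.sqrt δ := Real.sqrt_pos.mpr hδ
    have hδs : Real.sqrt δ * Real.sqrt δ = δ := Real.mul_self_sqrt hδ.le
    simp only [vr, hsqrt δ hδ hδρ]
    field_simp
    linear_combination (-(α * (ρl - δ))) * hδs
  -- part (iii)
  have h3 : Filter.Tendsto (fun δ => δ * (vr δ) ^ 2) (nhdsWithin 0 (Set.Ioi 0))
      (nhds (α ^ 2 * ρl)) := by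
    have hcont : Filter.Tendsto
        (fun δ : ℝ => δ * vl ^ 2 - 2 * vl * α * Real.sqrt δ * (ρl - δ) / Real.sqrt ρl
          + α ^ 2 * (ρl - δ) ^ 2 / ρl)
        (nhdsWithin 0 (Set.Ioi 0)) (nhds (α ^ 2 * ρl)) := by
      have hc : Continuous fun δ : ℝ => δ * vl ^ 2
          - 2 * vl * α * Real.sqrt δ * (ρl - δ) / Real.sqrt ρl
          + α ^ 2 * (ρl - δ) ^ 2 / ρl := by fun_prop
      have h : Filter.Tendsto (fun δ : ℝ => δ * vl ^ 2
            - 2 * vl * α * Real.sqrt δ * (ρl - δ) / Real.sqrt ρl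
            + α ^ 2 * (ρl - δ) ^ 2 / ρl)
          (nhdsWithin 0 (Set.Ioi 0))
          (nhds ((0:ℝ) * vl ^ 2 - 2 * vl * α * Real.sqrt 0 * (ρl - 0) / Real.sqrt ρl
            + α ^ 2 * (ρl - 0) ^ 2 / ρl)) :=
        (hc.tendsto 0).mono_left nhdsWithin_le_nhds
      have hval : (0:ℝ) * vl ^ 2 - 2 * vl * α * Real.sqrt 0 * (ρl - 0) / Real.sqrt ρl
          + α ^ 2 * (ρl - 0) ^ 2 / ρl = α ^ 2 * ρl := by
        rw [Real.sqrt_zero]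
        field_simp
        ring
      rwa [hval] at h
    refine hcont.congr' ?_
    filter_upwards [hev] with δ ⟨hδ, hδρ⟩
    have hs : (0:ℝ) < Real.sqrt δ := Real.sqrt_pos.mpr hδ
    have hδs : Real.sqrt δ * Real.sqrt δ = δ := Real.mul_self_sqrt hδ.le
    simp only [vr, hsqrt δ hδ hδρ]
    field_simp
    linear_combination (-2 * vl * α * (ρl - δ) * ρl * Real.sqrt ρl * Real.sqrt δ
        + α ^ 2 * (ρl - δ) ^ 2 * Real.sqrt ρl ^ 2) * hδs
      + α ^ 2 * (ρl - δ) ^ 2 * δ * hρs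
  -- part (i)
  have h1 : Filter.Tendsto σ (nhdsWithin 0 (Set.Ioi 0)) (nhds vl) := by
    have hnum : Filter.Tendsto (fun δ => ρl * vl - δ * vr δ)
        (nhdsWithin 0 (Set.Ioi 0)) (nhds (ρl * vl - 0)) :=
      tendsto_const_nhds.sub h2
    rw [sub_zero] at hnum
    have hden : Filter.Tendsto (fun δ : ℝ => ρl - δ)
        (nhdsWithin 0 (Set.Ioi 0)) (nhds (ρl - 0)) :=
      ((continuous_const.sub continuous_id).tendsto 0).mono_left nhdsWithin_le_nhds
    rw [sub_zero] at hden
    have h := hnum.div hden hρl.ne'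
    rw [mul_div_cancel_left₀ vl hρl.ne'] at h
    exact h
  exact ⟨h1, h2, h3⟩
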